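/- arXiv:1206.6312 — 4 statements merged into one kernel-verified Lean document; each statement's English description precedes it below -/
import Mathlib

section
/- One-step error bound for the cutoff scheme (inequality (thm2.1-6)). Let m be a positive integer, let B₀, B₁ be m×m real matrices with B₁ invertible, and let K, K₁, Δt > 0 satisfy ‖B₁⁻¹‖ ≤ K₁ and ‖B₁⁻¹ B₀‖ ≤ 1 + K Δt, where ‖·‖ is the operator norm on matrices induced by the supremum norm on ℝ^m. Let U, U', u, u', F ∈ ℝ^m with u componentwise nonnegative, suppose B₁ U' = B₀ U⁺ + F (the cutoff scheme step, where U⁺ is the componentwise nonnegative cutoff of U), and set τ = B₁ u' − B₀ u − F. Then ‖U' − u'‖∞ ≤ (1 + K Δt) ‖U − u‖∞ + K₁ ‖τ‖∞. -/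
open Matrix

/- For matrices we use the operator norm induced by the supremum norm on `ℝ^m`,
i.e. the maximum absolute row sum norm (`Matrix.linftyOpNormedAddCommGroup`). -/
attribute [local instance] Matrix.linftyOpNormedAddCommGroup Matrix.linftyOpNormedRing

/-- One-step error bound for the cutoff scheme (inequality (thm2.1-6)):
if `‖B₁⁻¹‖ ≤ K₁`, `‖B₁⁻¹ B₀‖ ≤ 1 + K Δt`, `u` is componentwise nonnegative,
`B₁ U' = B₀ U⁺ + F` (where `U⁺` is the componentwise nonnegative cutoff of `U`),
and `τ = B₁ u' - B₀ u - F`, then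
`‖U' - u'‖∞ ≤ (1 + K Δt) ‖U - u‖∞ + K₁ ‖τ‖∞`. -/
theorem cutoff_one_step_error (m : ℕ) (hm : 0 < m)
    (B₀ B₁ : Matrix (Fin m) (Fin m) ℝ) (hB₁ : IsUnit B₁)
    (K K₁ Δt : ℝ) (hK : 0 < K) (hK₁ : 0 < K₁) (hΔt : 0 < Δt)
    (hinv : ‖B₁⁻¹‖ ≤ K₁) (hstab : ‖B₁⁻¹ * B₀‖ ≤ 1 + K * Δt)
    (U U' u u' F : Fin m → ℝ) (hu : ∀ i, 0 ≤ u i)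
    (hstep : B₁.mulVec U' = B₀.mulVec (fun i => max (U i) 0) + F)
    (τ : Fin m → ℝ) (hτ : τ = B₁.mulVec u' - B₀.mulVec u - F) :
    ‖U' - u'‖ ≤ (1 + K * Δt) * ‖U - u‖ + K₁ * ‖τ‖ := by
  set Up : Fin m → ℝ := fun i => max (U i) 0 with hUp
  have hB₁' : B₁⁻¹ * B₁ = 1 := nonsing_inv_mul _ (isUnit_iff_isUnit_det _ |>.mp hB₁)
  -- key identity
  have hkey : U' - u' = (B₁⁻¹ * B₀).mulVec (Up - u) - B₁⁻¹.mulVec τ := by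
    have h1 : B₁.mulVec (U' - u') = B₀.mulVec (Up - u) - τ := by
      rw [hτ, mulVec_sub, mulVec_sub, hstep]
      abel
    have := congrArg (fun v => B₁⁻¹.mulVec v) h1
    simpa [mulVec_mulVec, hB₁', mulVec_sub] using this
  have hcut : ‖Up - u‖ ≤ ‖U - u‖ := by
    apply pi_norm_le_iff_of_nonneg (norm_nonneg _) |>.mpr
    intro i
    have h2 : ‖(Up - u) i‖ ≤ ‖(U - u) i‖ := by
      simp only [Pi.sub_apply, hUp, Real.norm_eq_abs]
      calc |max (U i) 0 - u i| = |max (U i) 0 - max (u i) 0| := by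
            rw [max_eq_left (hu i)]
        _ ≤ |U i - u i| := abs_max_sub_max_le_abs _ _ _
    exact h2.trans (norm_le_pi_norm (U - u) i)
  rw [hkey]
  calc ‖(B₁⁻¹ * B₀).mulVec (Up - u) - B₁⁻¹.mulVec τ‖
      ≤ ‖(B₁⁻¹ * B₀).mulVec (Up - u)‖ + ‖B₁⁻¹.mulVec τ‖ := norm_sub_le _ _
    _ ≤ ‖B₁⁻¹ * B₀‖ * ‖Up - u‖ + ‖B₁⁻¹‖ * ‖τ‖ :=
        add_le_add (linfty_opNorm_mulVec _ _) (linfty_opNorm_mulVec _ _)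
    _ ≤ (1 + K * Δt) * ‖U - u‖ + K₁ * ‖τ‖ :=
        add_le_add (mul_le_mul hstab hcut (norm_nonneg _) (by nlinarith))
          (mul_le_mul_of_nonneg_right hinv (norm_nonneg _))
end

section
/- Theorem 2.1 (convergence of the cutoff finite difference method). Let m be a positive integer, let B₀, B₁ be m×m real matrices with B₁ invertible, and let K, K₁, Δt > 0 and C, X ≥ 0 satisfy ‖B₁⁻¹‖ ≤ K₁ and ‖B₁⁻¹ B₀‖ ≤ 1 + K Δt, where ‖·‖ is the operator norm induced by the supremum norm on ℝ^m. Let u : ℕ → ℝ^m be a sequence of componentwise nonnegative vectors (the exact solution values), let F : ℕ → ℝ^m, and suppose the local truncation errors τ^n = B₁ u^{n+1} − B₀ u^n − F^n satisfy ‖τ^n‖∞ ≤ C · Δt · X for all n. Let U : ℕ → ℝ^m be the sequence generated by the cutoff scheme, i.e. U⁰ = u⁰ and B₁ U^{n+1} = B₀ (U^n)⁺ + F^n for all n, where (U^n)⁺ is the componentwise nonnegative cutoff of U^n. Then for every n, ‖(U^n)⁺ − u^n‖∞ ≤ ‖U^n − u^n‖∞ ≤ (K₁/K) · exp(K · n ·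 Δt) · C · X. (In the paper X = Δt^p + h^q for a (p,q)-order scheme, and tₙ = n Δt.) -/
open Matrix

/- For matrices we use the operator norm induced by the supremum norm on `ℝ^m`,
i.e. the maximum absolute row sum norm (`Matrix.linftyOpNormedAddCommGroup`). -/
attribute [local instance] Matrix.linftyOpNormedAddCommGroup Matrix.linftyOpNormedRing

/-- Theorem 2.1 (convergence of the cutoff finite difference method):
with `‖B₁⁻¹‖ ≤ K₁`, `‖B₁⁻¹ B₀‖ ≤ 1 + K Δt`, exact solution values `u n` componentwise
nonnegative with local truncation errors `τ n = B₁ u^{n+1} - B₀ u^n - F^n` satisfying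
`‖τ n‖∞ ≤ C Δt X`, and the cutoff scheme `U⁰ = u⁰`, `B₁ U^{n+1} = B₀ (U^n)⁺ + F^n`,
we have `‖(U^n)⁺ - u^n‖∞ ≤ ‖U^n - u^n‖∞ ≤ (K₁/K) exp(K n Δt) C X` for all `n`. -/
theorem cutoff_method_convergence (m : ℕ) (hm : 0 < m)
    (B₀ B₁ : Matrix (Fin m) (Fin m) ℝ) (hB₁ : IsUnit B₁)
    (K K₁ Δt C X : ℝ) (hK : 0 < K) (hK₁ : 0 < K₁) (hΔt : 0 < Δt)
    (hC : 0 ≤ C) (hX : 0 ≤ X)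
    (hinv : ‖B₁⁻¹‖ ≤ K₁) (hstab : ‖B₁⁻¹ * B₀‖ ≤ 1 + K * Δt)
    (u : ℕ → Fin m → ℝ) (hu : ∀ n i, 0 ≤ u n i)
    (F : ℕ → Fin m → ℝ)
    (hτ : ∀ n, ‖B₁.mulVec (u (n + 1)) - B₀.mulVec (u n) - F n‖ ≤ C * Δt * X)
    (U : ℕ → Fin m → ℝ) (hU0 : U 0 = u 0)
    (hstep : ∀ n, B₁.mulVec (U (n + 1)) = B₀.mulVec (fun i => max (U n i) 0) + F n) :
    ∀ n : ℕ, ‖(fun i => max (U n i) 0) - u n‖ ≤ ‖U n - u n‖ ∧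
      ‖U n - u n‖ ≤ (K₁ / K) * Real.exp (K * n * Δt) * C * X := by
  have hdet : IsUnit B₁.det := (Matrix.isUnit_iff_isUnit_det B₁).mp hB₁
  have hBinv : B₁⁻¹ * B₁ = 1 := Matrix.nonsing_inv_mul B₁ hdet
  have cutoff : ∀ n, ‖(fun i => max (U n i) 0) - u n‖ ≤ ‖U n - u n‖ := by
    intro n
    refine (pi_norm_le_iff_of_nonneg (norm_nonneg _)).mpr fun i => ?_
    refine le_trans ?_ (norm_le_pi_norm (U n - u n) i)
    simp only [Pi.sub_apply, Real.norm_eq_abs]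
    have h0 := hu n i
    rcases le_or_gt 0 (U n i) with h | h
    · rw [max_eq_left h]
    · rw [max_eq_right h.le, zero_sub, abs_neg, abs_of_nonneg h0,
        abs_of_nonpos (by linarith : U n i - u n i ≤ 0)]
      linarith
  have key : ∀ n, ‖U (n+1) - u (n+1)‖ ≤ (1 + K*Δt) * ‖U n - u n‖ + K₁ * (C * Δt * X) := by
    intro n
    have e1 : B₁.mulVec (U (n+1) - u (n+1)) =
        B₀.mulVec ((fun i => max (U n i) 0) - u n)
          - (B₁.mulVec (u (n+1)) - B₀.mulVec (u n) - F n) := by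
      rw [Matrix.mulVec_sub, Matrix.mulVec_sub, hstep n]
      abel
    have hrec : U (n+1) - u (n+1) =
        (B₁⁻¹ * B₀).mulVec ((fun i => max (U n i) 0) - u n)
          - B₁⁻¹.mulVec (B₁.mulVec (u (n+1)) - B₀.mulVec (u n) - F n) := by
      have := congrArg (B₁⁻¹.mulVec) e1
      rwa [Matrix.mulVec_mulVec, hBinv, Matrix.one_mulVec, Matrix.mulVec_sub,
        Matrix.mulVec_mulVec] at this
    rw [hrec]
    have h1 : ‖(B₁⁻¹ * B₀).mulVec ((fun i => max (U n i) 0) - u n)‖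
        ≤ (1 + K*Δt) * ‖U n - u n‖ := by
      refine le_trans (Matrix.linfty_opNorm_mulVec _ _) ?_
      have h2 := cutoff n
      have h3 : (0:ℝ) ≤ 1 + K * Δt := by positivity
      nlinarith [norm_nonneg ((fun i => max (U n i) 0) - u n), norm_nonneg (B₁⁻¹ * B₀)]
    have h4 : ‖B₁⁻¹.mulVec (B₁.mulVec (u (n+1)) - B₀.mulVec (u n) - F n)‖
        ≤ K₁ * (C * Δt * X) := by
      refine le_trans (Matrix.linfty_opNorm_mulVec _ _) ?_
      have := hτ n
      nlinarith [norm_nonneg (B₁.mulVec (u (n+1)) - B₀.mulVec (u n) - F n),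
        norm_nonneg (B₁⁻¹ : Matrix (Fin m) (Fin m) ℝ)]
    calc ‖_ - _‖ ≤ ‖(B₁⁻¹ * B₀).mulVec ((fun i => max (U n i) 0) - u n)‖
          + ‖B₁⁻¹.mulVec (B₁.mulVec (u (n+1)) - B₀.mulVec (u n) - F n)‖ := norm_sub_le _ _
      _ ≤ (1 + K*Δt) * ‖U n - u n‖ + K₁ * (C * Δt * X) := add_le_add h1 h4
  have main : ∀ n, ‖U n - u n‖ ≤ (K₁/K) * C * X * ((1 + K*Δt)^n - 1) := by
    intro n
    induction n with
    | zero => simp [hU0]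
    | succ n ih =>
      have := key n
      have hpow : (0:ℝ) ≤ (1 + K*Δt)^n := by positivity
      have hq : (1 + K*Δt) * ((K₁/K) * C * X * ((1 + K*Δt)^n - 1)) + K₁ * (C * Δt * X)
          = (K₁/K) * C * X * ((1 + K*Δt)^(n+1) - 1) := by
        field_simp
        ring
      have h3 : (0:ℝ) ≤ 1 + K * Δt := by positivity
      nlinarith [norm_nonneg (U n - u n)]
  intro n
  refine ⟨cutoff n, le_trans (main n) ?_⟩
  have hexp : (1 + K*Δt)^n - 1 ≤ Real.exp (K * n * Δt) := by
    have h1 : (1 + K*Δt)^n ≤ (Real.exp (K*Δt))^n := by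
      apply pow_le_pow_left₀ (by positivity)
      linarith [Real.add_one_le_exp (K*Δt)]
    have h2 : (Real.exp (K*Δt))^n = Real.exp (K * n * Δt) := by
      rw [← Real.exp_nat_mul]; ring_nf
    nlinarith [Real.exp_pos (K * n * Δt)]
  have : (0:ℝ) ≤ K₁ / K := by positivity
  calc (K₁/K) * C * X * ((1 + K*Δt)^n - 1) ≤ (K₁/K) * C * X * Real.exp (K * n * Δt) := by
        apply mul_le_mul_of_nonneg_left hexp (by positivity)
    _ = (K₁ / K) * Real.exp (K * n * Δt) * C * X := by ring
end

section
/- Theorem 2.2 (convergence of the δ-cutoff finite difference method). Let m be a positive integer, let B₀, B₁ be m×m real matrices with B₁ invertible, let δ ≥ 0 be a cutoff parameter, and let K, K₁, Δt > 0 and C, X ≥ 0 satisfy ‖B₁⁻¹‖ ≤ K₁ and ‖B₁⁻¹ B₀‖ ≤ 1 + K Δt, where ‖·‖ is the operator norm induced by the supremum norm on ℝ^m. Let u : ℕ → ℝ^m be a sequence of componentwise nonnegative vectors (the exact solution values), let F : ℕ → ℝ^m, and suppose the local truncation errors τ^n = B₁ u^{n+1} − B₀ u^n − F^n satisfy ‖τ^n‖∞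 ≤ C · Δt · X for all n. Let U : ℕ → ℝ^m be the sequence generated by the δ-cutoff scheme, i.e. U⁰ = u⁰ and B₁ U^{n+1} = B₀ (U^n)_δ⁺ + F^n for all n, where (U^n)_δ⁺ is the componentwise δ-cutoff of U^n. Then for every n, ‖(U^n)_δ⁺ − u^n‖∞ ≤ (K₁/K) · exp(K · n · Δt) · C · X + (((1 + K Δt)/(K Δt)) · exp(K · n · Δt) + 1) · δ. (In the paper X = Δt^p + h^q for a (p,q)-order scheme, and tₙ = n Δt.) -/
open Matrix

/- For matrices we use the operator norm induced by the supremum norm on `ℝ^m`,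
i.e. the maximum absolute row sum norm (`Matrix.linftyOpNormedAddCommGroup`). -/
attribute [local instance] Matrix.linftyOpNormedAddCommGroup Matrix.linftyOpNormedRing

/-- Pointwise cutoff estimate: `‖v_δ⁺ - w‖ ≤ ‖v - w‖ + δ` when `w ≥ 0`. -/
lemma cutoff_norm_le {m : ℕ} (δ : ℝ) (hδ : 0 ≤ δ) (v w : Fin m → ℝ)
    (hw : ∀ i, 0 ≤ w i) :
    ‖(fun i => max (v i) δ) - w‖ ≤ ‖v - w‖ + δ := by
  have hr : (0:ℝ) ≤ ‖v - w‖ + δ := by positivity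
  rw [pi_norm_le_iff_of_nonneg hr]
  intro i
  have h1 : ‖(v - w) i‖ ≤ ‖v - w‖ := norm_le_pi_norm (v - w) i
  simp only [Pi.sub_apply, Real.norm_eq_abs] at h1 ⊢
  rcases le_total (v i) δ with h | h
  · rw [max_eq_right h]
    rcases le_total (w i) δ with h2 | h2
    · rw [abs_of_nonneg (by linarith [hw i])]
      have := hw i; have := abs_nonneg (v i - w i); linarith
    · rw [abs_of_nonpos (by linarith)]
      have h3 : v i - w i ≤ 0 := by linarith
      rw [abs_of_nonpos h3] at h1
      linarith
  · rw [max_eq_left h]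
    have := abs_nonneg (v i - w i); linarith

/-- Theorem 2.2 (convergence of the δ-cutoff finite difference method):
with `‖B₁⁻¹‖ ≤ K₁`, `‖B₁⁻¹ B₀‖ ≤ 1 + K Δt`, exact solution values `u n` componentwise
nonnegative with local truncation errors `τ n = B₁ u^{n+1} - B₀ u^n - F^n` satisfying
`‖τ n‖∞ ≤ C Δt X`, and the δ-cutoff scheme `U⁰ = u⁰`, `B₁ U^{n+1} = B₀ (U^n)_δ⁺ + F^n`,
we have `‖(U^n)_δ⁺ - u^n‖∞ ≤ (K₁/K) exp(K n Δt) C X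
+ (((1 + K Δt)/(K Δt)) exp(K n Δt) + 1) δ` for all `n`. -/
theorem delta_cutoff_method_convergence (m : ℕ) (hm : 0 < m)
    (B₀ B₁ : Matrix (Fin m) (Fin m) ℝ) (hB₁ : IsUnit B₁)
    (δ : ℝ) (hδ : 0 ≤ δ)
    (K K₁ Δt C X : ℝ) (hK : 0 < K) (hK₁ : 0 < K₁) (hΔt : 0 < Δt)
    (hC : 0 ≤ C) (hX : 0 ≤ X)
    (hinv : ‖B₁⁻¹‖ ≤ K₁) (hstab : ‖B₁⁻¹ * B₀‖ ≤ 1 + K * Δt)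
    (u : ℕ → Fin m → ℝ) (hu : ∀ n i, 0 ≤ u n i)
    (F : ℕ → Fin m → ℝ)
    (hτ : ∀ n, ‖B₁.mulVec (u (n + 1)) - B₀.mulVec (u n) - F n‖ ≤ C * Δt * X)
    (U : ℕ → Fin m → ℝ) (hU0 : U 0 = u 0)
    (hstep : ∀ n, B₁.mulVec (U (n + 1)) = B₀.mulVec (fun i => max (U n i) δ) + F n) :
    ∀ n : ℕ, ‖(fun i => max (U n i) δ) - u n‖ ≤
      (K₁ / K) * Real.exp (K * n * Δt) * C * X
      + (((1 + K * Δt) / (K * Δt)) * Real.exp (K * n * Δt) + 1) * δ := by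
  have hdet : IsUnit B₁.det := (Matrix.isUnit_iff_isUnit_det B₁).mp hB₁
  have hKΔt : 0 < K * Δt := mul_pos hK hΔt
  set A := B₁⁻¹ * B₀ with hA
  set τ : ℕ → Fin m → ℝ := fun n => B₁.mulVec (u (n + 1)) - B₀.mulVec (u n) - F n with hτdef
  -- error recursion
  have hrec : ∀ n, U (n + 1) - u (n + 1)
      = A.mulVec ((fun i => max (U n i) δ) - u n) - B₁⁻¹.mulVec (τ n) := by
    intro n
    have h1 : B₁.mulVec (U (n + 1) - u (n + 1))
        = B₀.mulVec ((fun i => max (U n i) δ) - u n) - τ n := by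
      simp only [Matrix.mulVec_sub, hstep n, hτdef]
      abel
    calc U (n + 1) - u (n + 1)
        = B₁⁻¹.mulVec (B₁.mulVec (U (n + 1) - u (n + 1))) := by
          rw [Matrix.mulVec_mulVec, Matrix.nonsing_inv_mul _ hdet, Matrix.one_mulVec]
      _ = B₁⁻¹.mulVec (B₀.mulVec ((fun i => max (U n i) δ) - u n) - τ n) := by rw [h1]
      _ = A.mulVec ((fun i => max (U n i) δ) - u n) - B₁⁻¹.mulVec (τ n) := by
          rw [Matrix.mulVec_sub, Matrix.mulVec_mulVec]
  set E : ℕ → ℝ := fun n => ‖(fun i => max (U n i) δ) - u n‖ with hE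
  have hEnonneg : ∀ n, 0 ≤ E n := fun n => norm_nonneg _
  have hEstep : ∀ n, E (n + 1) ≤ (1 + K * Δt) * E n + (K₁ * (C * Δt * X) + δ) := by
    intro n
    have h2 : ‖U (n + 1) - u (n + 1)‖ ≤ (1 + K * Δt) * E n + K₁ * (C * Δt * X) := by
      rw [hrec n]
      calc ‖A.mulVec ((fun i => max (U n i) δ) - u n) - B₁⁻¹.mulVec (τ n)‖
          ≤ ‖A.mulVec ((fun i => max (U n i) δ) - u n)‖ + ‖B₁⁻¹.mulVec (τ n)‖ :=
            norm_sub_le _ _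
        _ ≤ ‖A‖ * E n + ‖B₁⁻¹‖ * ‖τ n‖ := by
            exact add_le_add (Matrix.linfty_opNorm_mulVec _ _) (Matrix.linfty_opNorm_mulVec _ _)
        _ ≤ (1 + K * Δt) * E n + K₁ * (C * Δt * X) :=
            add_le_add (mul_le_mul hstab le_rfl (norm_nonneg _) (by linarith))
              (mul_le_mul hinv (hτ n) (norm_nonneg _) ((norm_nonneg _).trans hinv))
    have h3 : E (n + 1) ≤ ‖U (n + 1) - u (n + 1)‖ + δ :=
      cutoff_norm_le δ hδ _ _ (hu (n + 1))
    linarith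
  have hE0 : E 0 ≤ δ := by
    show ‖(fun i => max (U 0 i) δ) - u 0‖ ≤ δ
    rw [hU0]
    simpa using cutoff_norm_le δ hδ (u 0) (u 0) (hu 0)
  -- closed-form discrete Gronwall bound
  set S : ℝ := (K₁ * (C * Δt * X) + δ) / (K * Δt) with hS
  have hSnonneg : 0 ≤ S := by positivity
  have hSKΔt : K * Δt * S = K₁ * (C * Δt * X) + δ := by
    rw [hS]; field_simp
  have hbound : ∀ n, E n ≤ (1 + K * Δt) ^ n * δ + ((1 + K * Δt) ^ n - 1) * S := by
    intro n
    induction n with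
    | zero => simpa using hE0
    | succ n ih =>
      have h1 : E (n + 1) ≤ (1 + K * Δt) * E n + K * Δt * S := by
        rw [hSKΔt]; exact hEstep n
      have hpos : (0:ℝ) < 1 + K * Δt := by linarith
      calc E (n + 1) ≤ (1 + K * Δt) * E n + K * Δt * S := h1
        _ ≤ (1 + K * Δt) * ((1 + K * Δt) ^ n * δ + ((1 + K * Δt) ^ n - 1) * S)
            + K * Δt * S := by
            gcongr
        _ = (1 + K * Δt) ^ (n + 1) * δ + ((1 + K * Δt) ^ (n + 1) - 1) * S := by ring
  intro n
  have hexp1 : 1 + K * Δt ≤ Real.exp (K * Δt) := by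
    have := Real.add_one_le_exp (K * Δt); linarith
  have hPle : (1 + K * Δt) ^ n ≤ Real.exp (K * (n : ℝ) * Δt) := by
    calc (1 + K * Δt) ^ n ≤ Real.exp (K * Δt) ^ n := by
          exact pow_le_pow_left₀ (by positivity) hexp1 n
      _ = Real.exp (K * (n : ℝ) * Δt) := by
          rw [← Real.exp_nat_mul]; ring_nf
  have hP1 : (1:ℝ) ≤ (1 + K * Δt) ^ n := one_le_pow₀ (by linarith)
  refine (hbound n).trans ?_
  set e := Real.exp (K * (n : ℝ) * Δt) with he
  set P := (1 + K * Δt) ^ n with hPdef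
  have he1 : (1:ℝ) ≤ e := hP1.trans hPle
  have hSeq : S = K₁ * C * X / K + δ / (K * Δt) := by
    rw [hS]; field_simp
  rw [hSeq]
  have hPe : P - 1 ≤ e := by linarith
  have f1 : (P - 1) * (K₁ * C * X / K) ≤ e * (K₁ * C * X / K) :=
    mul_le_mul_of_nonneg_right hPe (by positivity)
  have f2 : (P - 1) * (δ / (K * Δt)) ≤ e * (δ / (K * Δt)) :=
    mul_le_mul_of_nonneg_right hPe (by positivity)
  have f3 : P * δ ≤ e * δ := mul_le_mul_of_nonneg_right hPle hδ
  have f4 : K₁ / K * e * C * X = e * (K₁ * C * X / K) := by ring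
  have f5 : ((1 + K * Δt) / (K * Δt) * e + 1) * δ = e * δ + e * (δ / (K * Δt)) + δ := by
    field_simp; ring
  linarith [f1, f2, f3, f4, f5, hδ]
end

section
/- One-step error bound for the δ-cutoff scheme (used in the proof of Theorem 2.2). Let m be a positive integer, let B₀, B₁ be m×m real matrices with B₁ invertible, let δ ≥ 0, and let K, K₁, Δt > 0 satisfy ‖B₁⁻¹‖ ≤ K₁ and ‖B₁⁻¹ B₀‖ ≤ 1 + K Δt, where ‖·‖ is the operator norm on matrices induced by the supremum norm on ℝ^m. Let U, U', u, u', F ∈ ℝ^m with u componentwise nonnegative, suppose B₁ U' = B₀ U_δ⁺ + F (where U_δ⁺ is the componentwise δ-cutoff of U), and set τ = B₁ u' − B₀ u − F. Then ‖U' − u'‖∞ ≤ (1 + K Δt)(‖U − u‖∞ + δ) + K₁ ‖τ‖∞. -/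
open Matrix

/- For matrices we use the operator norm induced by the supremum norm on `ℝ^m`,
i.e. the maximum absolute row sum norm (`Matrix.linftyOpNormedAddCommGroup`). -/
attribute [local instance] Matrix.linftyOpNormedAddCommGroup Matrix.linftyOpNormedRing

/-- One-step error bound for the δ-cutoff scheme (used in the proof of Theorem 2.2):
if `‖B₁⁻¹‖ ≤ K₁`, `‖B₁⁻¹ B₀‖ ≤ 1 + K Δt`, `u` is componentwise nonnegative,
`B₁ U' = B₀ U_δ⁺ + F` (where `U_δ⁺` is the componentwise δ-cutoff of `U`),
and `τ = B₁ u' - B₀ u - F`, then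
`‖U' - u'‖∞ ≤ (1 + K Δt)(‖U - u‖∞ + δ) + K₁ ‖τ‖∞`. -/
theorem delta_cutoff_one_step_error (m : ℕ) (hm : 0 < m)
    (B₀ B₁ : Matrix (Fin m) (Fin m) ℝ) (hB₁ : IsUnit B₁)
    (δ : ℝ) (hδ : 0 ≤ δ)
    (K K₁ Δt : ℝ) (hK : 0 < K) (hK₁ : 0 < K₁) (hΔt : 0 < Δt)
    (hinv : ‖B₁⁻¹‖ ≤ K₁) (hstab : ‖B₁⁻¹ * B₀‖ ≤ 1 + K * Δt)
    (U U' u u' F : Fin m → ℝ) (hu : ∀ i, 0 ≤ u i)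
    (hstep : B₁.mulVec U' = B₀.mulVec (fun i => max (U i) δ) + F)
    (τ : Fin m → ℝ) (hτ : τ = B₁.mulVec u' - B₀.mulVec u - F) :
    ‖U' - u'‖ ≤ (1 + K * Δt) * (‖U - u‖ + δ) + K₁ * ‖τ‖ := by
  set Uc : Fin m → ℝ := fun i => max (U i) δ with hUc
  have hdet : IsUnit B₁.det := (Matrix.isUnit_iff_isUnit_det B₁).mp hB₁
  have hBB : B₁⁻¹ * B₁ = 1 := Matrix.nonsing_inv_mul B₁ hdet
  have key : U' - u' = (B₁⁻¹ * B₀).mulVec (Uc - u) - B₁⁻¹.mulVec τ := by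
    have h1 : B₁.mulVec (U' - u') = B₀.mulVec (Uc - u) - τ := by
      rw [Matrix.mulVec_sub, Matrix.mulVec_sub, hstep, hτ]
      abel
    calc U' - u' = (B₁⁻¹ * B₁).mulVec (U' - u') := by
          rw [hBB, Matrix.one_mulVec]
      _ = B₁⁻¹.mulVec (B₁.mulVec (U' - u')) := by rw [← Matrix.mulVec_mulVec]
      _ = B₁⁻¹.mulVec (B₀.mulVec (Uc - u) - τ) := by rw [h1]
      _ = (B₁⁻¹ * B₀).mulVec (Uc - u) - B₁⁻¹.mulVec τ := by
          rw [Matrix.mulVec_sub, Matrix.mulVec_mulVec]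
  have hcut : ‖Uc - u‖ ≤ ‖U - u‖ + δ := by
    have hnn : 0 ≤ ‖U - u‖ + δ := by positivity
    rw [pi_norm_le_iff_of_nonneg hnn]
    intro i
    have hi : |U i - u i| ≤ ‖U - u‖ := by
      simpa using norm_le_pi_norm (U - u) i
    rw [Real.norm_eq_abs, abs_le]
    constructor
    · have : -(‖U - u‖) ≤ U i - u i := neg_le_of_abs_le hi
      have h2 : U i ≤ Uc i := le_max_left _ _
      simp only [Pi.sub_apply]
      nlinarith
    · simp only [Pi.sub_apply]
      rcases le_total (U i) δ with h | h
      · have he : Uc i = δ := max_eq_right h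
        have hu' := hu i
        rw [he]
        nlinarith [abs_nonneg (U i - u i), hi]
      · have he : Uc i = U i := max_eq_left h
        have h3 : U i - u i ≤ |U i - u i| := le_abs_self _
        rw [he]
        nlinarith
  have hτn : 0 ≤ ‖τ‖ := norm_nonneg _
  calc ‖U' - u'‖ = ‖(B₁⁻¹ * B₀).mulVec (Uc - u) - B₁⁻¹.mulVec τ‖ := by rw [key]
    _ ≤ ‖(B₁⁻¹ * B₀).mulVec (Uc - u)‖ + ‖B₁⁻¹.mulVec τ‖ := norm_sub_le _ _
    _ ≤ ‖B₁⁻¹ * B₀‖ * ‖Uc - u‖ + ‖B₁⁻¹‖ * ‖τ‖ := by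
        gcongr <;> [exact Matrix.linfty_opNorm_mulVec _ _;
          exact Matrix.linfty_opNorm_mulVec _ _]
    _ ≤ (1 + K * Δt) * (‖U - u‖ + δ) + K₁ * ‖τ‖ := by
        have h0 : (0:ℝ) ≤ ‖Uc - u‖ := norm_nonneg _
        have h1 : (0:ℝ) ≤ 1 + K * Δt := by positivity
        nlinarith [norm_nonneg (B₁⁻¹ * B₀), norm_nonneg (B₁⁻¹)]
end
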